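/- For a connected weighted graph on K nodes with all weights positive, as γ → ∞ the minimizer θ(γ) of Σ_k (θ_k - b_k)² + γ Σ_{l>k} W_{kl}(θ_k - θ_l)² converges to the constant vector with all entries equal to the mean (1/K)Σ_k b_k. -/

import Mathlib

open Finset

/-- Graph Laplacian of a symmetric nonnegative weight matrix with zero diagonal. -/
noncomputable def graphLaplacian {K : ℕ} (W : Matrix (Fin K) (Fin K) ℝ) :
    Matrix (Fin K) (Fin K) ℝ :=
  Matrix.diagonal (fun k => ∑ m, W k m) - W

open Matrix

namespace FusedAux

variable {K : ℕ} (W : Matrix (Fin K) (Fin K) ℝ)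

lemma lap_mulVec (x : Fin K → ℝ) (k : Fin K) :
    (graphLaplacian W).mulVec x k = (∑ m, W k m) * x k - ∑ m, W k m * x m := by
  simp only [graphLaplacian, Matrix.sub_mulVec, Matrix.mulVec_diagonal, Pi.sub_apply]
  simp [Matrix.mulVec, dotProduct]

lemma sum_lap_mulVec (hW : W.IsSymm) (x : Fin K → ℝ) :
    ∑ k, (graphLaplacian W).mulVec x k = 0 := by
  simp only [lap_mulVec]
  rw [Finset.sum_sub_distrib]
  have h1 : ∑ k, (∑ m, W k m) * x k = ∑ k, ∑ m, W k m * x k := by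
    refine Finset.sum_congr rfl fun k _ => ?_
    rw [Finset.sum_mul]
  have h2 : ∑ k, ∑ m, W k m * x m = ∑ k, ∑ m, W k m * x k := by
    rw [Finset.sum_comm]
    refine Finset.sum_congr rfl fun m _ => Finset.sum_congr rfl fun k _ => ?_
    rw [hW.apply]
  rw [h1, h2, sub_self]

lemma lap_const (c : ℝ) :
    (graphLaplacian W).mulVec (fun _ => c) = 0 := by
  funext k
  simp only [lap_mulVec, Pi.zero_apply]
  rw [Finset.sum_mul]
  simp

lemma quad_eq (hW : W.IsSymm) (x : Fin K → ℝ) :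
    2 * (x ⬝ᵥ (graphLaplacian W).mulVec x) = ∑ k, ∑ m, W k m * (x k - x m) ^ 2 := by
  have key : ∑ k, ∑ m, W k m * x m ^ 2 = ∑ k, ∑ m, W k m * x k ^ 2 := by
    rw [Finset.sum_comm]
    refine Finset.sum_congr rfl fun m _ => Finset.sum_congr rfl fun k _ => ?_
    rw [hW.apply]
  have expand : ∀ k m, W k m * (x k - x m) ^ 2 =
      W k m * x k ^ 2 - 2 * (W k m * (x k * x m)) + W k m * x m ^ 2 := fun k m => by ring
  have lhs : x ⬝ᵥ (graphLaplacian W).mulVec x =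
      (∑ k, ∑ m, W k m * x k ^ 2) - ∑ k, ∑ m, W k m * (x k * x m) := by
    simp only [dotProduct, lap_mulVec]
    rw [← Finset.sum_sub_distrib]
    refine Finset.sum_congr rfl fun k _ => ?_
    rw [mul_sub, Finset.sum_mul, Finset.mul_sum, Finset.mul_sum, ← Finset.sum_sub_distrib,
      ← Finset.sum_sub_distrib]
    refine Finset.sum_congr rfl fun m _ => ?_
    ring
  simp only [expand, Finset.sum_add_distrib, Finset.sum_sub_distrib, key, lhs,
    ← Finset.mul_sum]
  ring

lemma quad_nonneg (hW : W.IsSymm) (hWnn : ∀ k l, 0 ≤ W k l) (x : Fin K → ℝ) :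
    0 ≤ x ⬝ᵥ (graphLaplacian W).mulVec x := by
  have h := quad_eq W hW x
  have hpos : 0 ≤ ∑ k, ∑ m, W k m * (x k - x m) ^ 2 :=
    Finset.sum_nonneg fun k _ => Finset.sum_nonneg fun m _ =>
      mul_nonneg (hWnn k m) (sq_nonneg _)
  linarith

lemma quad_zero_eq (hWnn : ∀ k l, 0 ≤ W k l)
    (hconn : (SimpleGraph.fromRel fun k l : Fin K => 0 < W k l).Connected)
    (x : Fin K → ℝ) (hx : ∑ k, ∑ m, W k m * (x k - x m) ^ 2 = 0) (k l : Fin K) :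
    x k = x l := by
  have hterm : ∀ k m, 0 < W k m → x k = x m := by
    intro k m hkm
    have h1 : ∀ i ∈ Finset.univ (α := Fin K), 0 ≤ ∑ m, W i m * (x i - x m) ^ 2 :=
      fun i _ => Finset.sum_nonneg fun m _ => mul_nonneg (hWnn i m) (sq_nonneg _)
    have h2 := (Finset.sum_eq_zero_iff_of_nonneg h1).mp hx k (Finset.mem_univ k)
    have h3 := (Finset.sum_eq_zero_iff_of_nonneg
      (fun m _ => mul_nonneg (hWnn k m) (sq_nonneg _))).mp h2 m (Finset.mem_univ m)
    rcases mul_eq_zero.mp h3 with h | h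
    · exact absurd h (ne_of_gt hkm)
    · have := pow_eq_zero_iff (n := 2) (by norm_num) |>.mp h
      linarith [sub_eq_zero.mp this]
  obtain ⟨p⟩ := hconn.preconnected k l
  induction p with
  | nil => rfl
  | cons h p ih =>
    rw [SimpleGraph.fromRel_adj] at h
    rcases h.2 with hw | hw
    · exact (hterm _ _ hw).trans ih
    · exact ((hterm _ _ hw).symm).trans ih

lemma isUnit_det (hW : W.IsSymm) (hWnn : ∀ k l, 0 ≤ W k l) {γ : ℝ} (hγ : 0 ≤ γ) :
    IsUnit ((1 : Matrix (Fin K) (Fin K) ℝ) + γ • graphLaplacian W).det := by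
  rw [← Matrix.isUnit_iff_isUnit_det, ← Matrix.mulVec_injective_iff_isUnit]
  intro x y hxy
  have key : ∀ z : Fin K → ℝ,
      ((1 : Matrix (Fin K) (Fin K) ℝ) + γ • graphLaplacian W).mulVec z = 0 → z = 0 := by
    intro z hz
    have hdot : z ⬝ᵥ ((1 : Matrix (Fin K) (Fin K) ℝ) + γ • graphLaplacian W).mulVec z = 0 := by
      rw [hz]; simp [dotProduct]
    rw [Matrix.add_mulVec, Matrix.one_mulVec, Matrix.smul_mulVec,
      dotProduct_add, dotProduct_smul] at hdot
    have h1 : 0 ≤ z ⬝ᵥ z := Finset.sum_nonneg fun i _ => mul_self_nonneg _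
    have h2 : 0 ≤ γ * (z ⬝ᵥ (graphLaplacian W).mulVec z) :=
      mul_nonneg hγ (quad_nonneg W hW hWnn z)
    have hzz : z ⬝ᵥ z = 0 := by
      simp only [smul_eq_mul] at hdot
      linarith
    funext i
    have : ∀ i ∈ Finset.univ (α := Fin K), 0 ≤ z i * z i :=
      fun i _ => mul_self_nonneg _
    have := (Finset.sum_eq_zero_iff_of_nonneg this).mp hzz i (Finset.mem_univ i)
    have := mul_self_eq_zero.mp this
    simp [this]
  have : ((1 : Matrix (Fin K) (Fin K) ℝ) + γ • graphLaplacian W).mulVec (x - y) = 0 := by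
    rw [Matrix.mulVec_sub, hxy, sub_self]
  have := key _ this
  exact sub_eq_zero.mp this

lemma quad_lower_bound (hK : 0 < K) (hW : W.IsSymm) (hWnn : ∀ k l, 0 ≤ W k l)
    (hconn : (SimpleGraph.fromRel fun k l : Fin K => 0 < W k l).Connected) :
    ∃ ε : ℝ, 0 < ε ∧ ∀ x : Fin K → ℝ, ∑ k, x k = 0 →
      ε * (x ⬝ᵥ x) ≤ x ⬝ᵥ (graphLaplacian W).mulVec x := by
  classical
  set Q : (Fin K → ℝ) → ℝ := fun x => x ⬝ᵥ (graphLaplacian W).mulVec x with hQdef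
  set S : Set (Fin K → ℝ) := {x | ∑ k, x k = 0} ∩ {x | x ⬝ᵥ x = 1} with hSdef
  -- basic facts about dot product
  have hdot_nonneg : ∀ x : Fin K → ℝ, 0 ≤ x ⬝ᵥ x :=
    fun x => Finset.sum_nonneg fun i _ => mul_self_nonneg _
  have hdot_zero : ∀ x : Fin K → ℝ, x ⬝ᵥ x = 0 → x = 0 := by
    intro x hx
    funext i
    have h0 : ∀ i ∈ Finset.univ (α := Fin K), 0 ≤ x i * x i := fun i _ => mul_self_nonneg _
    have := (Finset.sum_eq_zero_iff_of_nonneg h0).mp hx i (Finset.mem_univ i)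
    simpa using mul_self_eq_zero.mp this
  -- normalization: any sum-zero x with x ⬝ᵥ x ≠ 0 yields an element of S
  have hnorm : ∀ x : Fin K → ℝ, ∑ k, x k = 0 → x ⬝ᵥ x ≠ 0 →
      ∃ y ∈ S, Q x = (x ⬝ᵥ x) * Q y := by
    intro x hsum hxx
    have hpos : 0 < x ⬝ᵥ x := lt_of_le_of_ne (hdot_nonneg x) (Ne.symm hxx)
    set c : ℝ := Real.sqrt (x ⬝ᵥ x) with hc
    have hcpos : 0 < c := Real.sqrt_pos.mpr hpos
    have hc2 : c * c = x ⬝ᵥ x := Real.mul_self_sqrt (le_of_lt hpos)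
    refine ⟨c⁻¹ • x, ⟨?_, ?_⟩, ?_⟩
    · show ∑ k, (c⁻¹ • x) k = 0
      simp only [Pi.smul_apply, smul_eq_mul, ← Finset.mul_sum, hsum, mul_zero]
    · show (c⁻¹ • x) ⬝ᵥ (c⁻¹ • x) = 1
      rw [smul_dotProduct, dotProduct_smul, smul_eq_mul, smul_eq_mul]
      field_simp
      linarith [hc2]
    · show Q x = (x ⬝ᵥ x) * Q (c⁻¹ • x)
      simp only [hQdef]
      rw [Matrix.mulVec_smul, smul_dotProduct, dotProduct_smul,
        smul_eq_mul, smul_eq_mul]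
      rw [← hc2]
      field_simp
  have hQcont : Continuous Q := by
    simp only [hQdef, dotProduct, Matrix.mulVec]
    fun_prop
  have hclosed : IsClosed S := by
    refine IsClosed.inter ?_ ?_
    · exact isClosed_eq (by fun_prop) continuous_const
    · exact isClosed_eq (by simp only [dotProduct]; fun_prop) continuous_const
  have hbdd : Bornology.IsBounded S := by
    rw [isBounded_iff_forall_norm_le]
    refine ⟨1, fun x hx => ?_⟩
    rw [pi_norm_le_iff_of_nonneg zero_le_one]
    intro i
    have hx2 : x ⬝ᵥ x = 1 := hx.2
    have hle : x i * x i ≤ 1 := by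
      rw [← hx2]
      exact Finset.single_le_sum (f := fun k => x k * x k)
        (fun k _ => mul_self_nonneg _) (Finset.mem_univ i)
    have habs : |x i| * |x i| = x i * x i := abs_mul_abs_self (x i)
    have : ‖x i‖ = |x i| := Real.norm_eq_abs _
    rw [this]
    nlinarith [abs_nonneg (x i)]
  have hcompact : IsCompact S := Metric.isCompact_of_isClosed_isBounded hclosed hbdd
  by_cases hS : S.Nonempty
  · obtain ⟨x₀, hx₀S, hmin⟩ := hcompact.exists_isMinOn hS hQcont.continuousOn
    have hε0 : 0 < Q x₀ := by
      rcases lt_or_eq_of_le (quad_nonneg W hW hWnn x₀) with h | h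
      · exact h
      · exfalso
        have hsum0 : ∑ k, ∑ m, W k m * (x₀ k - x₀ m) ^ 2 = 0 := by
          have h2 := quad_eq W hW x₀
          linarith
        have hconst := quad_zero_eq W hWnn hconn x₀ hsum0
        obtain ⟨j⟩ : Nonempty (Fin K) := ⟨⟨0, hK⟩⟩
        have hall : ∀ k, x₀ k = x₀ j := fun k => hconst k j
        have hsum : ∑ k, x₀ k = K * x₀ j := by
          rw [Finset.sum_congr rfl fun k _ => hall k]
          simp [Finset.card_univ, mul_comm]
        have hKj : (K : ℝ) * x₀ j = 0 := by rw [← hsum]; exact hx₀S.1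
        have hKne : (K : ℝ) ≠ 0 := Nat.cast_ne_zero.mpr hK.ne'
        have hj0 : x₀ j = 0 := by
          rcases mul_eq_zero.mp hKj with h' | h'
          · exact absurd h' hKne
          · exact h'
        have : x₀ = 0 := by funext k; rw [Pi.zero_apply, hall k, hj0]
        rw [this] at hx₀S
        have := hx₀S.2
        simp [dotProduct] at this
    refine ⟨Q x₀, hε0, fun x hxsum => ?_⟩
    by_cases hxx : x ⬝ᵥ x = 0
    · have hx0 := hdot_zero x hxx
      rw [hxx, mul_zero, hx0]
      simp [dotProduct]
    · obtain ⟨y, hyS, hQxy⟩ := hnorm x hxsum hxx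
      have hεy : Q x₀ ≤ Q y := hmin hyS
      have hpos : 0 < x ⬝ᵥ x := lt_of_le_of_ne (hdot_nonneg x) (Ne.symm hxx)
      calc Q x₀ * (x ⬝ᵥ x) ≤ Q y * (x ⬝ᵥ x) := by nlinarith
        _ = x ⬝ᵥ (graphLaplacian W).mulVec x := by rw [mul_comm, ← hQxy]
  · refine ⟨1, one_pos, fun x hxsum => ?_⟩
    by_cases hxx : x ⬝ᵥ x = 0
    · have hx0 := hdot_zero x hxx
      rw [hxx, mul_zero, hx0]
      simp [dotProduct]
    · obtain ⟨y, hyS, _⟩ := hnorm x hxsum hxx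
      exact absurd ⟨y, hyS⟩ hS

end FusedAux

theorem fused_minimizer_tendsto_mean {K : ℕ} (hK : 0 < K)
    (b : Fin K → ℝ) (W : Matrix (Fin K) (Fin K) ℝ)
    (hW : W.IsSymm) (hWnn : ∀ k l, 0 ≤ W k l) (hWdiag : ∀ k, W k k = 0)
    (hconn : (SimpleGraph.fromRel fun k l : Fin K => 0 < W k l).Connected) :
    Filter.Tendsto
      (fun gam : ℝ =>
        (((1 : Matrix (Fin K) (Fin K) ℝ) + gam • graphLaplacian W)⁻¹).mulVec b)
      Filter.atTop
      (nhds fun _ : Fin K => (∑ k, b k) / K) := by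
  classical
  set L := graphLaplacian W with hL
  set m : ℝ := (∑ k, b k) / K with hm
  set u : Fin K → ℝ := fun k => b k - m with hu
  have hKne : (K : ℝ) ≠ 0 := Nat.cast_ne_zero.mpr hK.ne'
  have husum : ∑ k, u k = 0 := by
    simp only [hu, Finset.sum_sub_distrib, Finset.sum_const, Finset.card_univ,
      Fintype.card_fin, nsmul_eq_mul, hm]
    field_simp
    ring
  have hA : ∀ γ : ℝ, 0 ≤ γ → IsUnit ((1 : Matrix (Fin K) (Fin K) ℝ) + γ • L).det :=
    fun γ hγ => FusedAux.isUnit_det W hW hWnn hγ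
  set X : ℝ → (Fin K → ℝ) :=
    fun γ => (((1 : Matrix (Fin K) (Fin K) ℝ) + γ • L)⁻¹).mulVec u with hX
  have hXsolve : ∀ γ : ℝ, 0 ≤ γ →
      ((1 : Matrix (Fin K) (Fin K) ℝ) + γ • L).mulVec (X γ) = u := by
    intro γ hγ
    rw [hX]
    rw [Matrix.mulVec_mulVec, Matrix.mul_nonsing_inv _ (hA γ hγ), Matrix.one_mulVec]
  have hXsum : ∀ γ : ℝ, 0 ≤ γ → ∑ k, X γ k = 0 := by
    intro γ hγ
    have h1 : ∑ k, (((1 : Matrix (Fin K) (Fin K) ℝ) + γ • L).mulVec (X γ)) k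
        = ∑ k, u k := by rw [hXsolve γ hγ]
    rw [husum] at h1
    simp only [Matrix.add_mulVec, Matrix.one_mulVec, Matrix.smul_mulVec,
      Pi.add_apply, Pi.smul_apply, smul_eq_mul, Finset.sum_add_distrib,
      ← Finset.mul_sum, hL, FusedAux.sum_lap_mulVec W hW] at h1
    simpa using h1
  have hdecomp : ∀ γ : ℝ, 0 ≤ γ →
      (((1 : Matrix (Fin K) (Fin K) ℝ) + γ • L)⁻¹).mulVec b
        = fun k => m + X γ k := by
    intro γ hγ
    have hb : b = (fun _ => m) + u := by funext k; simp [hu]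
    rw [hb, Matrix.mulVec_add]
    have hconst : (((1 : Matrix (Fin K) (Fin K) ℝ) + γ • L)⁻¹).mulVec (fun _ => m)
        = fun _ => m := by
      have h1 : ((1 : Matrix (Fin K) (Fin K) ℝ) + γ • L).mulVec (fun _ => m)
          = fun _ => m := by
        rw [Matrix.add_mulVec, Matrix.one_mulVec, Matrix.smul_mulVec, hL,
          FusedAux.lap_const]
        simp
      conv_lhs => rw [← h1]
      rw [Matrix.mulVec_mulVec, Matrix.nonsing_inv_mul _ (hA γ hγ), Matrix.one_mulVec]
    rw [hconst]
    rfl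
  obtain ⟨ε, hε, hbound⟩ := FusedAux.quad_lower_bound W hK hW hWnn hconn
  set C : ℝ := Real.sqrt (u ⬝ᵥ u) with hC
  have huu_nn : 0 ≤ u ⬝ᵥ u := Finset.sum_nonneg fun i _ => mul_self_nonneg _
  have hCnn : 0 ≤ C := Real.sqrt_nonneg _
  have hC2 : C ^ 2 = u ⬝ᵥ u := Real.sq_sqrt huu_nn
  have hXbound : ∀ γ : ℝ, 0 ≤ γ → ∀ k, |X γ k| ≤ C / (1 + γ * ε) := by
    intro γ hγ k
    have hd : (0:ℝ) < 1 + γ * ε := by nlinarith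
    set x := X γ with hx
    have hxu : x ⬝ᵥ u = x ⬝ᵥ x + γ * (x ⬝ᵥ L.mulVec x) := by
      conv_lhs => rw [← hXsolve γ hγ]
      rw [Matrix.add_mulVec, Matrix.one_mulVec, Matrix.smul_mulVec,
        dotProduct_add, dotProduct_smul, smul_eq_mul]
    have hq := hbound x (hXsum γ hγ)
    have hxx_nn : 0 ≤ x ⬝ᵥ x := Finset.sum_nonneg fun i _ => mul_self_nonneg _
    have hlow : (1 + γ * ε) * (x ⬝ᵥ x) ≤ x ⬝ᵥ u := by nlinarith
    have hcs : (x ⬝ᵥ u) ^ 2 ≤ (x ⬝ᵥ x) * (u ⬝ᵥ u) := by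
      have h := Finset.sum_mul_sq_le_sq_mul_sq Finset.univ x u
      simpa [dotProduct, sq] using h
    have hxk2 : x k ^ 2 ≤ x ⬝ᵥ x := by
      have h := Finset.single_le_sum (f := fun i => x i * x i)
        (fun i _ => mul_self_nonneg _) (Finset.mem_univ k)
      simpa [dotProduct, sq] using h
    -- key squared inequality
    have hkey : x k ^ 2 * (1 + γ * ε) ^ 2 ≤ C ^ 2 := by
      rcases eq_or_lt_of_le hxx_nn with hn0 | hnpos
      · have : x k ^ 2 ≤ 0 := by rw [hn0]; exact hxk2
        nlinarith [sq_nonneg (x k), sq_nonneg C]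
      · -- (1+γε)² (x⬝x)² ≤ (x⬝u)² ≤ (x⬝x)(u⬝u), divide by x⬝x
        have h1 : (0:ℝ) ≤ x ⬝ᵥ u := le_trans (by positivity) hlow
        have h2 : ((1 + γ * ε) * (x ⬝ᵥ x)) ^ 2 ≤ (x ⬝ᵥ u) ^ 2 := by
          apply sq_le_sq' <;> nlinarith
        have h3 : (1 + γ * ε) ^ 2 * (x ⬝ᵥ x) ≤ u ⬝ᵥ u := by
          have h4 : (1 + γ * ε) ^ 2 * (x ⬝ᵥ x) * (x ⬝ᵥ x) ≤ (u ⬝ᵥ u) * (x ⬝ᵥ x) := by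
            nlinarith
          exact le_of_mul_le_mul_right h4 hnpos
        nlinarith
    rw [le_div_iff₀ hd]
    have ha : (0:ℝ) ≤ |x k| * (1 + γ * ε) := mul_nonneg (abs_nonneg _) hd.le
    have ha2 : (|x k| * (1 + γ * ε)) ^ 2 ≤ C ^ 2 := by
      rw [mul_pow, sq_abs]; exact hkey
    exact (pow_le_pow_iff_left₀ ha hCnn (by norm_num)).mp ha2
  -- the bound function tends to 0
  have hg0 : Filter.Tendsto (fun γ : ℝ => C / (1 + γ * ε)) Filter.atTop (nhds 0) := by
    apply Filter.Tendsto.div_atTop (tendsto_const_nhds)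
    apply Filter.tendsto_atTop_add_const_left
    exact Filter.Tendsto.atTop_mul_const hε Filter.tendsto_id
  have hmain : Filter.Tendsto (fun γ : ℝ => (fun k => m + X γ k))
      Filter.atTop (nhds fun _ : Fin K => m) := by
    rw [tendsto_pi_nhds]
    intro k
    have h0 : Filter.Tendsto (fun γ => X γ k) Filter.atTop (nhds 0) := by
      apply squeeze_zero_norm' _ hg0
      filter_upwards [Filter.eventually_ge_atTop (0:ℝ)] with γ hγ
      simpa [Real.norm_eq_abs] using hXbound γ hγ k
    simpa using (tendsto_const_nhds (x := m)).add h0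
  apply hmain.congr'
  filter_upwards [Filter.eventually_ge_atTop (0:ℝ)] with γ hγ
  exact (hdecomp γ hγ).symm
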